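/- Let S be a dense subsemigroup of (T,+), e ∈ E(T), (X,⟨T_s⟩_{s∈S}) a dynamical system, and x, y ∈ X. There is an idempotent u in the smallest ideal K(e*_S) with T_u(x) = y if and only if y is uniformly recurrent near e and x and y are proximal near e. -/
import Mathlib

open Filter Topology Set

attribute [local instance] Ultrafilter.add Ultrafilter.addSemigroup

universe u

section NearIdem

variable {T : Type u} [AddSemigroup T] [TopologicalSpace T]

/-- The set of ultrafilters on `S` converging to `e` (denoted `e*_S`). -/
def EStar (S : AddSubsemigroup T) (e : T) : Set (Ultrafilter S) :=
  {p | ∀ U ∈ nhds e, {s : S | (s : T) ∈ U} ∈ p}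

/-- `B ⊆ S` is syndetic near `e`. -/
def SyndeticNear (S : AddSubsemigroup T) (e : T) (B : Set S) : Prop :=
  ∀ U ∈ nhds e, ∃ F : Finset S, (∀ t ∈ F, (t : T) ∈ U) ∧
    ∃ V ∈ nhds e, ∀ s : S, (s : T) ∈ V → ∃ t ∈ F, t + s ∈ B

/-- `A ⊆ S` is topologically piecewise syndetic near `e`. -/
def TopPWSNear (S : AddSubsemigroup T) (e : T) (A : Set S) : Prop :=
  ∀ U ∈ nhds e, ∃ F : Finset S, (∀ t ∈ F, (t : T) ∈ U) ∧
    ∃ V ∈ nhds e, ∀ G : Finset S, ∀ O ∈ nhds e, ∃ x : S, (x : T) ∈ O ∧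
      ∀ g ∈ G, (g : T) ∈ V → ∃ t ∈ F, t + (g + x) ∈ A

/-- Left ideal of a subsemigroup `E` of `βM`. -/
def IsLeftIdealIn {M : Type*} [AddSemigroup M] (E L : Set (Ultrafilter M)) : Prop :=
  L.Nonempty ∧ L ⊆ E ∧ ∀ p ∈ E, ∀ q ∈ L, p + q ∈ L

/-- Minimal left ideal of `E`. -/
def IsMinimalLeftIdealIn {M : Type*} [AddSemigroup M] (E L : Set (Ultrafilter M)) : Prop :=
  IsLeftIdealIn E L ∧ ∀ L', IsLeftIdealIn E L' → L' ⊆ L → L' = L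

/-- The smallest ideal `K(E)`, the union of all minimal left ideals of `E`. -/
def SmallestIdeal {M : Type*} [AddSemigroup M] (E : Set (Ultrafilter M)) : Set (Ultrafilter M) :=
  {p | ∃ L, IsMinimalLeftIdealIn E L ∧ p ∈ L}

/-- `T_p(x) = p`-`lim_(s ∈ S) T_s(x)`. -/
noncomputable def TP {M : Type*} {X : Type*} [TopologicalSpace X]
    (Ts : M → X → X) (p : Ultrafilter M) (x : X) : X :=
  (p.map fun s => Ts s x).lim

/-- `x` is a uniformly recurrent point near `e`. -/
def UnifRecNear (S : AddSubsemigroup T) (e : T) {X : Type*} [TopologicalSpace X]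
    (Ts : S → X → X) (x : X) : Prop :=
  ∀ W ∈ nhds x, SyndeticNear S e {s : S | Ts s x ∈ W}

/-- `x` and `y` are proximal near `e` (characterized via `e*_S`). -/
noncomputable def ProximalNear (S : AddSubsemigroup T) (e : T) {X : Type*} [TopologicalSpace X]
    (Ts : S → X → X) (x y : X) : Prop :=
  ∃ p ∈ EStar S e, TP Ts p x = TP Ts p y

/-! ### Auxiliary lemmas about `TP` -/

section TPaux

variable {σ : Type*} {X : Type*} [TopologicalSpace X] [CompactSpace X]

lemma tp_tendsto (Ts : σ → X → X) (p : Ultrafilter σ) (x : X) :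
    Tendsto (fun s => Ts s x) ↑p (𝓝 (TP Ts p x)) := by
  have h := Ultrafilter.le_nhds_lim (p.map fun s => Ts s x)
  rwa [Ultrafilter.coe_map] at h

variable [T2Space X]

lemma tp_unique {Ts : σ → X → X} {p : Ultrafilter σ} {x z : X}
    (h : Tendsto (fun s => Ts s x) ↑p (𝓝 z)) : TP Ts p x = z :=
  tendsto_nhds_unique (tp_tendsto Ts p x) h

lemma tp_continuous (Ts : σ → X → X) (x : X) :
    Continuous fun p : Ultrafilter σ => TP Ts p x := by
  have h : (fun p : Ultrafilter σ => TP Ts p x) = Ultrafilter.extend fun s => Ts s x := by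
    funext p
    exact (ultrafilter_extend_eq_iff.mpr (tp_tendsto Ts p x)).symm
  rw [h]
  exact continuous_ultrafilter_extend _

lemma tp_add [AddSemigroup σ] (Ts : σ → X → X) (hTcont : ∀ s, Continuous (Ts s))
    (hTact : ∀ s t z, Ts s (Ts t z) = Ts (s + t) z)
    (p q : Ultrafilter σ) (x : X) :
    TP Ts (p + q) x = TP Ts p (TP Ts q x) := by
  apply tp_unique
  intro W hW
  rcases mem_nhds_iff.mp hW with ⟨W', hW'sub, hW'open, hcW'⟩
  refine mem_of_superset ?_ (preimage_mono hW'sub)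
  have key : ∀ᶠ a in ↑p, ∀ᶠ b in ↑q, Ts (a + b) x ∈ W' := by
    have hp : ∀ᶠ a in ↑p, Ts a (TP Ts q x) ∈ W' :=
      tp_tendsto Ts p _ (hW'open.mem_nhds hcW')
    filter_upwards [hp] with a ha
    have hq' : ∀ᶠ b in ↑q, Ts b x ∈ Ts a ⁻¹' W' :=
      tp_tendsto Ts q x ((hW'open.preimage (hTcont a)).mem_nhds ha)
    filter_upwards [hq'] with b hb
    rw [← hTact]
    exact hb
  exact (Ultrafilter.eventually_add p q _).mpr key

end TPaux

/-! ### Auxiliary lemmas about left ideals -/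

section Ideals

variable {σ : Type*} [AddSemigroup σ] {E : Set (Ultrafilter σ)}

lemma leftIdeal_image (hE : ∀ p ∈ E, ∀ q ∈ E, p + q ∈ E) (hEne : E.Nonempty)
    {w : Ultrafilter σ} (hw : w ∈ E) : IsLeftIdealIn E ((· + w) '' E) := by
  refine ⟨hEne.image _, ?_, ?_⟩
  · rintro _ ⟨r, hr, rfl⟩
    exact hE r hr w hw
  · rintro p hp _ ⟨r, hr, rfl⟩
    exact ⟨p + r, hE p hp r hr, add_assoc p r w⟩

lemma exists_minimal_leftIdeal (hE : ∀ p ∈ E, ∀ q ∈ E, p + q ∈ E) (hEcl : IsClosed E)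
    {L₀ : Set (Ultrafilter σ)} (hL₀ : IsLeftIdealIn E L₀) (hL₀c : IsCompact L₀) :
    ∃ L, IsMinimalLeftIdealIn E L ∧ L ⊆ L₀ := by
  set C : Set (Set (Ultrafilter σ)) := {L | IsLeftIdealIn E L ∧ IsCompact L} with hC
  have hH : ∀ c ⊆ C, IsChain (· ⊆ ·) c → c.Nonempty → ∃ lb ∈ C, ∀ s ∈ c, lb ⊆ s := by
    intro c hcC hchain hcne
    refine ⟨⋂₀ c, ⟨⟨?_, ?_, ?_⟩, ?_⟩, fun s hs => sInter_subset_of_mem hs⟩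
    · rw [sInter_eq_iInter]
      haveI : Nonempty c := hcne.to_subtype
      apply IsCompact.nonempty_iInter_of_directed_nonempty_isCompact_isClosed
      · intro i j
        rcases hchain.total i.2 j.2 with h | h
        · exact ⟨i, Subset.rfl, h⟩
        · exact ⟨j, h, Subset.rfl⟩
      · exact fun i => (hcC i.2).1.1
      · exact fun i => (hcC i.2).2
      · exact fun i => (hcC i.2).2.isClosed
    · obtain ⟨L, hL⟩ := hcne
      exact (sInter_subset_of_mem hL).trans (hcC hL).1.2.1
    · intro p hp q hq
      rw [mem_sInter] at hq ⊢
      exact fun L hL => (hcC hL).1.2.2 p hp q (hq L hL)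
    · obtain ⟨L, hL⟩ := hcne
      exact ((hcC hL).2).of_isClosed_subset
        (isClosed_sInter fun L' hL' => (hcC hL').2.isClosed) (sInter_subset_of_mem hL)
  obtain ⟨m, hmL₀, hmmem, hmmin⟩ := zorn_superset_nonempty C hH L₀ ⟨hL₀, hL₀c⟩
  refine ⟨m, ⟨hmmem.1, ?_⟩, hmL₀⟩
  intro L' hL' hL'm
  obtain ⟨w, hw⟩ := hL'.1
  have hEne : E.Nonempty := hL₀.1.mono hL₀.2.1
  have hwE : w ∈ E := hL'.2.1 hw
  have hEw : IsLeftIdealIn E ((· + w) '' E) := leftIdeal_image hE hEne hwE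
  have hEwL' : (· + w) '' E ⊆ L' := by
    rintro _ ⟨r, hr, rfl⟩
    exact hL'.2.2 r hr w hw
  have hEwC : (· + w) '' E ∈ C :=
    ⟨hEw, (hEcl.isCompact).image (Ultrafilter.continuous_add_left w)⟩
  have hm2 : m ⊆ (· + w) '' E := hmmin hEwC (hEwL'.trans hL'm)
  exact Subset.antisymm hL'm (hm2.trans hEwL')

lemma minimal_leftIdeal_isCompact (hE : ∀ p ∈ E, ∀ q ∈ E, p + q ∈ E) (hEcl : IsClosed E)
    {L : Set (Ultrafilter σ)} (hL : IsMinimalLeftIdealIn E L) : IsCompact L := by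
  obtain ⟨w, hw⟩ := hL.1.1
  have hEne : E.Nonempty := hL.1.1.mono hL.1.2.1
  have hwE : w ∈ E := hL.1.2.1 hw
  have hEw : IsLeftIdealIn E ((· + w) '' E) := leftIdeal_image hE hEne hwE
  have hEwL : (· + w) '' E ⊆ L := by
    rintro _ ⟨r, hr, rfl⟩
    exact hL.1.2.2 r hr w hw
  have h : (· + w) '' E = L := hL.2 _ hEw hEwL
  rw [← h]
  exact (hEcl.isCompact).image (Ultrafilter.continuous_add_left w)

lemma minimal_leftIdeal_add (hE : ∀ p ∈ E, ∀ q ∈ E, p + q ∈ E)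
    {L : Set (Ultrafilter σ)} (hL : IsMinimalLeftIdealIn E L)
    {q : Ultrafilter σ} (hq : q ∈ E) : IsMinimalLeftIdealIn E ((· + q) '' L) := by
  have hideal : IsLeftIdealIn E ((· + q) '' L) := by
    refine ⟨hL.1.1.image _, ?_, ?_⟩
    · rintro _ ⟨l, hl, rfl⟩
      exact hE l (hL.1.2.1 hl) q hq
    · rintro p hp _ ⟨l, hl, rfl⟩
      exact ⟨p + l, hL.1.2.2 p hp l hl, add_assoc p l q⟩
  refine ⟨hideal, ?_⟩
  intro L'' hL'' hsub
  obtain ⟨w, hw⟩ := hL''.1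
  obtain ⟨l, hl, rfl⟩ := hsub hw
  have hA : IsLeftIdealIn E {m | m ∈ L ∧ m + q ∈ L''} := by
    refine ⟨⟨l, hl, hw⟩, fun m hm => hL.1.2.1 hm.1, ?_⟩
    intro p hp m hm
    refine ⟨hL.1.2.2 p hp m hm.1, ?_⟩
    rw [add_assoc]
    exact hL''.2.2 p hp _ hm.2
  have hAL : {m | m ∈ L ∧ m + q ∈ L''} = L := hL.2 _ hA fun m hm => hm.1
  apply Subset.antisymm hsub
  rintro _ ⟨m, hm, rfl⟩
  have hmA : m ∈ {m | m ∈ L ∧ m + q ∈ L''} := by rw [hAL]; exact hm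
  exact hmA.2

lemma exists_add_eq_of_minimal (hE : ∀ p ∈ E, ∀ q ∈ E, p + q ∈ E)
    {L L' : Set (Ultrafilter σ)} (hL : IsMinimalLeftIdealIn E L)
    (hL' : IsMinimalLeftIdealIn E L') {u : Ultrafilter σ} (hu : u ∈ L) :
    ∃ v ∈ L', v + u = u := by
  have huE : u ∈ E := hL.1.2.1 hu
  have hideal : IsLeftIdealIn E ((· + u) '' L') := by
    refine ⟨hL'.1.1.image _, ?_, ?_⟩
    · rintro _ ⟨p, hp, rfl⟩
      exact hE p (hL'.1.2.1 hp) u huE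
    · rintro p hp _ ⟨r, hr, rfl⟩
      exact ⟨p + r, hL'.1.2.2 p hp r hr, add_assoc p r u⟩
  have hsub : (· + u) '' L' ⊆ L := by
    rintro _ ⟨p, hp, rfl⟩
    exact hL.1.2.2 p (hL'.1.2.1 hp) u hu
  have heq : (· + u) '' L' = L := hL.2 _ hideal hsub
  have huim : u ∈ (· + u) '' L' := by rw [heq]; exact hu
  obtain ⟨v, hv, hvu⟩ := huim
  exact ⟨v, hv, hvu⟩

lemma ultrafilter_of_family {ι : Type*} [Nonempty ι] {α : Type*} (D : ι → Set α)
    (hne : ∀ i, (D i).Nonempty) (hdir : ∀ i j, ∃ k, D k ⊆ D i ∩ D j) :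
    ∃ q : Ultrafilter α, ∀ i, D i ∈ q := by
  have hd : Directed (· ≥ ·) fun i => (𝓟 (D i) : Filter α) := by
    intro i j
    obtain ⟨k, hk⟩ := hdir i j
    exact ⟨k, principal_mono.mpr (hk.trans inter_subset_left),
      principal_mono.mpr (hk.trans inter_subset_right)⟩
  haveI : NeBot (⨅ i, (𝓟 (D i) : Filter α)) :=
    iInf_neBot_of_directed' hd fun i => principal_neBot_iff.mpr (hne i)
  exact ⟨Ultrafilter.of _, fun i =>
    Ultrafilter.of_le _ (mem_iInf_of_mem i (mem_principal_self _))⟩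

end Ideals

/-! ### Auxiliary lemmas about `EStar` -/

section EStarAux

lemma estar_closed (S : AddSubsemigroup T) (e : T) : IsClosed (EStar S e) := by
  have h : EStar S e = ⋂ U ∈ 𝓝 e, {p : Ultrafilter S | {s : S | (s : T) ∈ U} ∈ p} := by
    ext p
    simp only [EStar, mem_setOf_eq, mem_iInter]
  rw [h]
  exact isClosed_biInter fun U _ => ultrafilter_isClosed_basic _

lemma estar_nonempty (S : AddSubsemigroup T) (hdense : Dense (S : Set T)) (e : T) :
    (EStar S e).Nonempty := by
  have hne : (Filter.comap (Subtype.val : S → T) (𝓝 e)).NeBot := by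
    rw [comap_neBot_iff]
    intro U hU
    rcases mem_closure_iff_nhds.mp (hdense e) U hU with ⟨t, htU, htS⟩
    exact ⟨⟨t, htS⟩, htU⟩
  exact ⟨Ultrafilter.of _, fun U hU => Ultrafilter.of_le _ (preimage_mem_comap hU)⟩

lemma estar_add (S : AddSubsemigroup T) {e : T}
    (hl : ∀ t : T, Continuous fun x : T => t + x)
    (hr : ∀ t : T, Continuous fun x : T => x + t)
    (he : e + e = e) {p q : Ultrafilter S} (hp : p ∈ EStar S e) (hq : q ∈ EStar S e) :
    p + q ∈ EStar S e := by
  intro U hU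
  rcases mem_nhds_iff.mp hU with ⟨U', hU'sub, hU'open, heU'⟩
  refine mem_of_superset ?_ fun s hs => hU'sub hs
  show {s : S | (s : T) ∈ U'} ∈ p + q
  have h1 : {x : T | x + e ∈ U'} ∈ 𝓝 e := by
    have h := (hr e).continuousAt (x := e)
    rw [ContinuousAt, he] at h
    exact h (hU'open.mem_nhds heU')
  have hp1 : {a : S | (a : T) + e ∈ U'} ∈ p := hp _ h1
  have key : ∀ᶠ a in ↑p, ∀ᶠ b in ↑q, ((a + b : S) : T) ∈ U' := by
    filter_upwards [hp1] with a ha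
    have h2 : {x : T | (a : T) + x ∈ U'} ∈ 𝓝 e := by
      have h := (hl (a : T)).continuousAt (x := e)
      exact h (hU'open.mem_nhds ha)
    filter_upwards [hq _ h2] with b hb
    exact hb
  exact (Ultrafilter.eventually_add p q _).mpr key

end EStarAux

variable [T2Space T]

/-- `T_u(x) = y` for some idempotent `u ∈ K(e*_S)` iff `y` is uniformly
recurrent near `e` and `x, y` are proximal near `e`. -/
theorem idempotent_in_K_iff (S : AddSubsemigroup T) (hdense : Dense (S : Set T))
    (hl : ∀ t : T, Continuous fun x : T => t + x)
    (hr : ∀ t : T, Continuous fun x : T => x + t)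
    (e : T) (he : e + e = e)
    {X : Type u} [TopologicalSpace X] [CompactSpace X] [T2Space X]
    (Ts : S → X → X) (hTcont : ∀ s, Continuous (Ts s))
    (hTact : ∀ s t z, Ts s (Ts t z) = Ts (s + t) z) (x y : X) :
    (∃ u ∈ SmallestIdeal (EStar S e), u + u = u ∧ TP Ts u x = y) ↔
      UnifRecNear S e Ts y ∧ ProximalNear S e Ts x y := by
  classical
  have hEadd : ∀ p ∈ EStar S e, ∀ q ∈ EStar S e, p + q ∈ EStar S e :=
    fun p hp q hq => estar_add S hl hr he hp hq
  have hEcl : IsClosed (EStar S e) := estar_closed S e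
  have hEne : (EStar S e).Nonempty := estar_nonempty S hdense e
  constructor
  · rintro ⟨u, ⟨L, hLmin, huL⟩, huu, hux⟩
    have huE : u ∈ EStar S e := hLmin.1.2.1 huL
    have huy : TP Ts u y = y := by
      have h := tp_add Ts hTcont hTact u u x
      rw [huu] at h
      rw [← hux]
      exact h.symm
    refine ⟨?_, u, huE, by rw [hux, huy]⟩
    -- uniform recurrence of `y` near `e`
    intro W hW
    obtain ⟨W', hW'sub, hW'open, hyW'⟩ := mem_nhds_iff.mp hW
    suffices h : SyndeticNear S e {s : S | Ts s y ∈ W'} by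
      intro U hU
      obtain ⟨F, hF, V, hV, hsyn⟩ := h U hU
      refine ⟨F, hF, V, hV, fun s hs => ?_⟩
      obtain ⟨t, htF, htB⟩ := hsyn s hs
      exact ⟨t, htF, hW'sub htB⟩
    intro U₀ hU₀
    by_contra hcon
    push_neg at hcon
    haveI : Nonempty {FV : Finset S × Set T // (∀ t ∈ FV.1, (t : T) ∈ U₀) ∧ FV.2 ∈ 𝓝 e} :=
      ⟨⟨(∅, univ), by simp, univ_mem⟩⟩
    obtain ⟨q, hq⟩ := ultrafilter_of_family
      (ι := {FV : Finset S × Set T // (∀ t ∈ FV.1, (t : T) ∈ U₀) ∧ FV.2 ∈ 𝓝 e})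
      (fun i => {s : S | (s : T) ∈ i.1.2 ∧ ∀ t ∈ i.1.1, Ts (t + s) y ∉ W'})
      (by
        rintro ⟨⟨F, V⟩, hF, hV⟩
        obtain ⟨s, hsV, hsB⟩ := hcon F hF V hV
        exact ⟨s, hsV, fun t ht => hsB t ht⟩)
      (by
        rintro ⟨⟨F₁, V₁⟩, hF₁, hV₁⟩ ⟨⟨F₂, V₂⟩, hF₂, hV₂⟩
        refine ⟨⟨(F₁ ∪ F₂, V₁ ∩ V₂), ?_, inter_mem hV₁ hV₂⟩, ?_⟩
        · intro t ht
          rcases Finset.mem_union.mp ht with h | h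
          exacts [hF₁ t h, hF₂ t h]
        · rintro s ⟨hsV, hsB⟩
          exact ⟨⟨hsV.1, fun t ht => hsB t (Finset.mem_union_left _ ht)⟩,
            ⟨hsV.2, fun t ht => hsB t (Finset.mem_union_right _ ht)⟩⟩)
    have hqE : q ∈ EStar S e := by
      intro V hV
      exact mem_of_superset (hq ⟨(∅, V), by simp, hV⟩) fun s hs => hs.1
    have hL'min := minimal_leftIdeal_add hEadd hLmin hqE
    obtain ⟨v, hvL', hvu⟩ := exists_add_eq_of_minimal hEadd hLmin hL'min huL
    obtain ⟨l, hlL, hlv⟩ := hvL'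
    have hlv' : l + q = v := hlv
    have hlE : l ∈ EStar S e := hLmin.1.2.1 hlL
    have hvu' : (l + q) + u = u := by rw [hlv']; exact hvu
    have hy2 : TP Ts l (TP Ts q y) = y := by
      have h1 : TP Ts ((l + q) + u) y = y := by rw [hvu', huy]
      rw [tp_add Ts hTcont hTact, huy, tp_add Ts hTcont hTact] at h1
      exact h1
    have hA1 : {a : S | Ts a (TP Ts q y) ∈ W'} ∈ l := by
      have ht := tp_tendsto Ts l (TP Ts q y)
      rw [hy2] at ht
      exact ht (hW'open.mem_nhds hyW')
    have hA2 : {a : S | (a : T) ∈ U₀} ∈ l := hlE U₀ hU₀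
    obtain ⟨a, haW, haU⟩ := l.nonempty_of_mem (inter_mem hA1 hA2)
    have htend : Tendsto (fun b : S => Ts a (Ts b y)) ↑q (𝓝 (Ts a (TP Ts q y))) :=
      Filter.Tendsto.comp ((hTcont a).continuousAt) (tp_tendsto Ts q y)
    have hgood : {b : S | Ts a (Ts b y) ∈ W'} ∈ q := htend (hW'open.mem_nhds haW)
    have hbad : {b : S | Ts (a + b) y ∉ W'} ∈ q := by
      refine mem_of_superset (hq ⟨({a}, univ), by simpa using haU, univ_mem⟩) fun b hb => ?_
      exact hb.2 a (Finset.mem_singleton_self a)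
    obtain ⟨b, hb1, hb2⟩ := q.nonempty_of_mem (inter_mem hgood hbad)
    exact hb2 (by rw [← hTact]; exact hb1)
  · rintro ⟨hrec, p, hpE, hpxy⟩
    have hL₀ : IsLeftIdealIn (EStar S e) ((· + p) '' EStar S e) :=
      leftIdeal_image hEadd hEne hpE
    have hL₀c : IsCompact ((· + p) '' EStar S e) :=
      (hEcl.isCompact).image (Ultrafilter.continuous_add_left p)
    obtain ⟨L, hLmin, hLsub⟩ := exists_minimal_leftIdeal hEadd hEcl hL₀ hL₀c
    obtain ⟨w, hwL⟩ := hLmin.1.1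
    have hwE : w ∈ EStar S e := hLmin.1.2.1 hwL
    have claim : ∀ W, IsOpen W → y ∈ W → ∀ U ∈ 𝓝 e,
        ∃ a : S, (a : T) ∈ U ∧ Ts a (TP Ts w y) ∈ W := by
      intro W hWopen hyW U hU
      obtain ⟨C, hCnhds, hCclosed, hCW⟩ := exists_mem_nhds_isClosed_subset (hWopen.mem_nhds hyW)
      have hW₁ : interior C ∈ 𝓝 y :=
        isOpen_interior.mem_nhds (mem_interior_iff_mem_nhds.mpr hCnhds)
      obtain ⟨F, hFU, V, hV, hcov⟩ := hrec (interior C) hW₁ U hU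
      have hVw : {s : S | (s : T) ∈ V} ∈ w := hwE V hV
      have hcover : {s : S | (s : T) ∈ V} ⊆
          ⋃ t ∈ (F : Set S), {s : S | Ts (t + s) y ∈ interior C} := by
        intro s hs
        obtain ⟨t, htF, htB⟩ := hcov s hs
        exact mem_biUnion htF htB
      obtain ⟨t₀, ht₀F, ht₀⟩ := (Ultrafilter.finite_biUnion_mem_iff F.finite_toSet).mp
        (mem_of_superset hVw hcover)
      refine ⟨t₀, hFU t₀ ht₀F, ?_⟩
      have htend : Tendsto (fun s : S => Ts t₀ (Ts s y)) ↑w (𝓝 (Ts t₀ (TP Ts w y))) :=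
        Filter.Tendsto.comp ((hTcont t₀).continuousAt) (tp_tendsto Ts w y)
      have hcl : Ts t₀ (TP Ts w y) ∈ closure (interior C) := by
        refine mem_closure_of_tendsto htend ?_
        filter_upwards [ht₀] with s hs
        rw [hTact]
        exact hs
      have hsubC : closure (interior C) ⊆ C :=
        (closure_mono interior_subset).trans hCclosed.closure_eq.subset
      exact hCW (hsubC hcl)
    haveI : Nonempty {WU : Set X × Set T // (IsOpen WU.1 ∧ y ∈ WU.1) ∧ WU.2 ∈ 𝓝 e} :=
      ⟨⟨(univ, univ), ⟨isOpen_univ, mem_univ y⟩, univ_mem⟩⟩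
    obtain ⟨v', hv'⟩ := ultrafilter_of_family
      (ι := {WU : Set X × Set T // (IsOpen WU.1 ∧ y ∈ WU.1) ∧ WU.2 ∈ 𝓝 e})
      (fun i => {a : S | (a : T) ∈ i.1.2 ∧ Ts a (TP Ts w y) ∈ i.1.1})
      (by
        rintro ⟨⟨W, U⟩, ⟨hWo, hyW⟩, hU⟩
        obtain ⟨a, haU, haW⟩ := claim W hWo hyW U hU
        exact ⟨a, haU, haW⟩)
      (by
        rintro ⟨⟨W₁, U₁⟩, ⟨hW₁o, hyW₁⟩, hU₁⟩ ⟨⟨W₂, U₂⟩, ⟨hW₂o, hyW₂⟩, hU₂⟩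
        refine ⟨⟨(W₁ ∩ W₂, U₁ ∩ U₂), ⟨hW₁o.inter hW₂o, ⟨hyW₁, hyW₂⟩⟩, inter_mem hU₁ hU₂⟩, ?_⟩
        rintro a ⟨haU, haW⟩
        exact ⟨⟨haU.1, haW.1⟩, haU.2, haW.2⟩)
    have hv'E : v' ∈ EStar S e := by
      intro V hV
      exact mem_of_superset (hv' ⟨(univ, V), ⟨isOpen_univ, mem_univ y⟩, hV⟩) fun a ha => ha.1
    have hv'z : TP Ts v' (TP Ts w y) = y := by
      apply tp_unique
      intro W hW
      obtain ⟨W', hW'sub, hW'open, hyW'⟩ := mem_nhds_iff.mp hW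
      rw [mem_map]
      refine mem_of_superset (hv' ⟨(W', univ), ⟨hW'open, hyW'⟩, univ_mem⟩) ?_
      intro a ha
      exact hW'sub ha.2
    have hvL : v' + w ∈ L := hLmin.1.2.2 v' hv'E w hwL
    have hvy : TP Ts (v' + w) y = y := by
      rw [tp_add Ts hTcont hTact]
      exact hv'z
    have hMne : (L ∩ {m : Ultrafilter S | TP Ts m y = y}).Nonempty := ⟨v' + w, hvL, hvy⟩
    have hMc : IsCompact (L ∩ {m : Ultrafilter S | TP Ts m y = y}) :=
      (minimal_leftIdeal_isCompact hEadd hEcl hLmin).inter_right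
        (isClosed_eq (tp_continuous Ts y) continuous_const)
    have hMadd : ∀ m₁ ∈ L ∩ {m : Ultrafilter S | TP Ts m y = y},
        ∀ m₂ ∈ L ∩ {m : Ultrafilter S | TP Ts m y = y},
        m₁ + m₂ ∈ L ∩ {m : Ultrafilter S | TP Ts m y = y} := by
      rintro m₁ ⟨hm₁L, hm₁y⟩ m₂ ⟨hm₂L, hm₂y⟩
      refine ⟨hLmin.1.2.2 m₁ (hLmin.1.2.1 hm₁L) m₂ hm₂L, ?_⟩
      show TP Ts (m₁ + m₂) y = y
      rw [tp_add Ts hTcont hTact, hm₂y]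
      exact hm₁y
    obtain ⟨u, huM, huu⟩ := exists_idempotent_in_compact_add_subsemigroup
      (fun r => Ultrafilter.continuous_add_left r) _ hMne hMc hMadd
    obtain ⟨r, hrE, hru⟩ := hLsub huM.1
    have hru' : r + p = u := hru
    have hux : TP Ts u x = y := by
      rw [← hru', tp_add Ts hTcont hTact, hpxy, ← tp_add Ts hTcont hTact, hru']
      exact huM.2
    exact ⟨u, ⟨L, hLmin, huM.1⟩, huu, hux⟩

end NearIdem
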